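/- arXiv:1612.00499 — 5 statements merged into one kernel-verified Lean document; each statement's English description precedes it below -/
import Mathlib

section
/- Let $A$ be a real $n \times n$ matrix, $B$ a real $n \times \ell$ matrix, $C$ a real $s \times n$ matrix. Let $V$ be a real $n \times q$ matrix with $V^T V = I_q$, $W$ a real $n \times p$ matrix with $W^T W = I_p$ and $V^T W = 0$. Let $\mathcal{T} = V^T A^T V$, let $E$ be the $q \times p$ matrix consisting of the last $p$ columns of $I_q$, and let $H$ be a $p \times p$ matrix such that the Arnoldi-type relation $A^T V = V \mathcal{T} + W H E^T$ holds. Assume $C^T = V G$ for some $q \times s$ matrix $G$, and set $B_q = V^T B$. Let $Y : \mathbb{R} \to \mathbb{R}^{q \times q}$ be differentiable and satisfy the projected differential Riccati equation $\dot{Y}(t) = \mathcal{T} Y(t) + Y(t) \mathcal{T}^T - Y(t) B_q B_q^T Y(t) + G G^T$ for all $t$. Define $X_m(t) = V Y(t) V^T$ and the residual $R_m(t) = \dot{X}_m(t) - A^T X_m(t) - X_m(t) A + X_m(t) B B^T X_m(t) - C^T C$. Then for every $t$, $R_m(t) = -\big( V\, Y(t) E H^T\, W^T + W\, H E^T Y(t)\,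 V^T \big)$; equivalently, $R_m(t) = [V\ W] \begin{pmatrix} 0 & -Y(t) E H^T \\ -H E^T Y(t) & 0 \end{pmatrix} [V\ W]^T$. -/
open scoped Matrix

attribute [local instance] Matrix.normedAddCommGroup Matrix.normedSpace

/-- In the extended block Arnoldi setting, if `Y` solves the
projected differential Riccati equation, then the residual of `Xₘ(t) = V Y(t) Vᵀ`
for the full differential Riccati equation is
`Rₘ(t) = -(V (Y(t) E Hᵀ) Wᵀ + W (H Eᵀ Y(t)) Vᵀ)`, equivalently
`Rₘ(t) = [V W] [[0, -Y(t) E Hᵀ], [-H Eᵀ Y(t), 0]] [V W]ᵀ`. -/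
theorem residual_formula_extended_block_arnoldi
    {n l s q p : ℕ} (hpq : p ≤ q)
    (A : Matrix (Fin n) (Fin n) ℝ) (B : Matrix (Fin n) (Fin l) ℝ)
    (C : Matrix (Fin s) (Fin n) ℝ)
    (V : Matrix (Fin n) (Fin q) ℝ) (W : Matrix (Fin n) (Fin p) ℝ)
    (hV : Vᵀ * V = 1) (hW : Wᵀ * W = 1) (hVW : Vᵀ * W = 0)
    (T : Matrix (Fin q) (Fin q) ℝ) (hT : T = Vᵀ * Aᵀ * V)
    (E : Matrix (Fin q) (Fin p) ℝ)
    (hE : ∀ i j, E i j = if (i : ℕ) = q - p + (j : ℕ) then 1 else 0)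
    (H : Matrix (Fin p) (Fin p) ℝ)
    (hArnoldi : Aᵀ * V = V * T + W * H * Eᵀ)
    (G : Matrix (Fin q) (Fin s) ℝ) (hC : Cᵀ = V * G)
    (Bq : Matrix (Fin q) (Fin l) ℝ) (hBq : Bq = Vᵀ * B)
    (Y Y' : ℝ → Matrix (Fin q) (Fin q) ℝ)
    (hY : ∀ t, HasDerivAt Y (Y' t) t)
    (hode : ∀ t, Y' t = T * Y t + Y t * Tᵀ - Y t * Bq * Bqᵀ * Y t + G * Gᵀ)
    (Xm : ℝ → Matrix (Fin n) (Fin n) ℝ) (hXm : ∀ t, Xm t = V * Y t * Vᵀ)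
    (Rm : ℝ → Matrix (Fin n) (Fin n) ℝ)
    (hRm : ∀ t, Rm t =
      deriv Xm t - Aᵀ * Xm t - Xm t * A + Xm t * B * Bᵀ * Xm t - Cᵀ * C) :
    ∀ t, Rm t = -(V * (Y t * E * Hᵀ) * Wᵀ + W * (H * Eᵀ * Y t) * Vᵀ) ∧
      Rm t = Matrix.fromCols V W *
        Matrix.fromBlocks 0 (-(Y t * E * Hᵀ)) (-(H * Eᵀ * Y t)) 0 *
        (Matrix.fromCols V W)ᵀ := by
  intro t
  have hderiv : deriv Xm t = V * Y' t * Vᵀ := by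
    let L : Matrix (Fin q) (Fin q) ℝ →ₗ[ℝ] Matrix (Fin n) (Fin n) ℝ :=
      { toFun := fun M => V * M * Vᵀ
        map_add' := fun M N => by simp [Matrix.mul_add, Matrix.add_mul]
        map_smul' := fun c M => by simp [Matrix.mul_smul, Matrix.smul_mul] }
    have h1 : HasDerivAt (fun t => L (Y t)) (L (Y' t)) t :=
      (L.toContinuousLinearMap.hasFDerivAt).comp_hasDerivAt t (hY t)
    have hXmfun : Xm = fun t => L (Y t) := by
      funext u; simpa [L] using hXm u
    rw [hXmfun]
    exact h1.deriv
  have hC2 : C = Gᵀ * Vᵀ := by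
    have := congrArg Matrix.transpose hC
    simpa [Matrix.transpose_mul] using this
  have hVA : Vᵀ * A = Tᵀ * Vᵀ + E * (Hᵀ * Wᵀ) := by
    have := congrArg Matrix.transpose hArnoldi
    simpa [Matrix.transpose_mul, mul_assoc] using this
  have key : Rm t = -(V * (Y t * E * Hᵀ) * Wᵀ + W * (H * Eᵀ * Y t) * Vᵀ) := by
    have e1 : Aᵀ * Xm t = (V * T + W * H * Eᵀ) * (Y t * Vᵀ) := by
      rw [hXm, ← hArnoldi]; simp only [← Matrix.mul_assoc]
    have e2 : Xm t * A = (V * Y t) * (Tᵀ * Vᵀ + E * (Hᵀ * Wᵀ)) := by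
      rw [hXm, ← hVA]; simp only [Matrix.mul_assoc]
    rw [hRm, hderiv, e1, e2, hXm, hode, hBq, hC, hC2]
    simp only [Matrix.transpose_mul, Matrix.transpose_transpose,
      Matrix.mul_add, Matrix.add_mul, Matrix.mul_sub, Matrix.sub_mul,
      Matrix.mul_assoc, neg_add_rev]
    abel
  refine ⟨key, ?_⟩
  rw [key, Matrix.transpose_fromCols, Matrix.fromCols_mul_fromBlocks,
    Matrix.fromCols_mul_fromRows]
  simp only [Matrix.mul_zero, Matrix.mul_neg, Matrix.neg_mul, zero_add, add_zero,
    neg_add_rev, Matrix.mul_assoc]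
end

section
/- Let $A$ be a real $n \times n$ matrix, $B$ a real $n \times \ell$ matrix, $C$ a real $s \times n$ matrix. Let $V$ be a real $n \times q$ matrix with $V^T V = I_q$, $W$ a real $n \times p$ matrix with $W^T W = I_p$ and $V^T W = 0$. Let $\mathcal{T} = V^T A^T V$, let $E$ be the $q \times p$ matrix of the last $p$ columns of $I_q$, and let $H$ be a $p \times p$ matrix with $A^T V = V \mathcal{T} + W H E^T$. Assume $C^T = V G$ for some $q \times s$ matrix $G$, set $B_q = V^T B$, and let $Y : \mathbb{R} \to \mathbb{R}^{q \times q}$ be differentiable, with $Y(t)$ symmetric for all $t$, satisfying $\dot{Y}(t) = \mathcal{T} Y(t) + Y(t) \mathcal{T}^T - Y(t) B_q B_q^T Y(t) + G G^T$. Define $X_m(t) = V Y(t) V^T$ and the residual $R_m(t) = \dot{X}_m(t) - A^T X_m(t) - X_m(t) A + X_m(t) B B^T X_m(t) - C^T C$. Then the spectral norm of the residual satisfies $\|R_m(t)\|_2 = \|H E^T Y(t)\|_2$ for every $t$, i.e. it equals the spectral norm of the $p \times q$ matrix formed by $H$ times the last $p$ rows of $Y(t)$. -/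
open scoped Matrix

attribute [local instance] Matrix.normedAddCommGroup Matrix.normedSpace

/-- The spectral norm of a real matrix: its operator norm as a linear map
between Euclidean spaces. -/
noncomputable def spectralNorm' {m n : Type*} [Fintype m] [Fintype n] [DecidableEq n]
    (M : Matrix m n ℝ) : ℝ :=
  ‖LinearMap.toContinuousLinearMap (Matrix.toEuclideanLin M)‖

noncomputable def clm' {m n : Type*} [Fintype m] [Fintype n] [DecidableEq n]
    (M : Matrix m n ℝ) : EuclideanSpace ℝ n →L[ℝ] EuclideanSpace ℝ m :=
  LinearMap.toContinuousLinearMap (Matrix.toEuclideanLin M)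
lemma spectralNorm'_eq {m n : Type*} [Fintype m] [Fintype n] [DecidableEq n]
    (M : Matrix m n ℝ) : spectralNorm' M = ‖clm' M‖ := rfl
lemma clm'_mul {m n k : Type*} [Fintype m] [Fintype n] [Fintype k] [DecidableEq n]
    [DecidableEq k] (M : Matrix m n ℝ) (N : Matrix n k ℝ) :
    clm' (M * N) = (clm' M).comp (clm' N) := by
  ext x; simp [clm', Matrix.toEuclideanLin_apply, Matrix.mulVec_mulVec]
lemma clm'_add {m n : Type*} [Fintype m] [Fintype n] [DecidableEq n]
    (M N : Matrix m n ℝ) : clm' (M + N) = clm' M + clm' N := by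
  ext x; simp [clm', Matrix.toEuclideanLin_apply, Matrix.add_mulVec]
lemma clm'_neg {m n : Type*} [Fintype m] [Fintype n] [DecidableEq n]
    (M : Matrix m n ℝ) : clm' (-M) = -(clm' M) := by
  ext x; simp [clm', Matrix.toEuclideanLin_apply, Matrix.neg_mulVec]
lemma clm'_zero {m n : Type*} [Fintype m] [Fintype n] [DecidableEq n] :
    clm' (0 : Matrix m n ℝ) = 0 := by
  ext x; simp [clm', Matrix.toEuclideanLin_apply]
lemma transpose_eq_conjTranspose' {m n : Type*} (M : Matrix m n ℝ) : Mᵀ = Mᴴ := by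
  ext i j; simp [Matrix.conjTranspose_apply]
lemma inner_clm'_left {m n : Type*} [Fintype m] [Fintype n] [DecidableEq n] [DecidableEq m]
    (M : Matrix m n ℝ) (x : EuclideanSpace ℝ n) (y : EuclideanSpace ℝ m) :
    inner ℝ (clm' M x) y = (inner ℝ x (clm' Mᵀ y) : ℝ) := by
  rw [transpose_eq_conjTranspose']
  show inner ℝ (Matrix.toEuclideanLin M x) y = (inner ℝ x (Matrix.toEuclideanLin Mᴴ y) : ℝ)
  rw [Matrix.toEuclideanLin_conjTranspose_eq_adjoint, LinearMap.adjoint_inner_right]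
lemma norm_clm'_isometry {m n : Type*} [Fintype m] [Fintype n] [DecidableEq n] [DecidableEq m]
    (V : Matrix m n ℝ) (hV : Vᵀ * V = 1) (x : EuclideanSpace ℝ n) :
    ‖clm' V x‖ = ‖x‖ := by
  have h : (inner ℝ (clm' V x) (clm' V x) : ℝ) = inner ℝ x x := by
    rw [inner_clm'_left]
    congr 1
    calc clm' Vᵀ (clm' V x) = clm' (Vᵀ * V) x := by rw [clm'_mul]; rfl
      _ = x := by rw [hV]; simp [clm', Matrix.toEuclideanLin_apply]
  rw [real_inner_self_eq_norm_sq, real_inner_self_eq_norm_sq] at h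
  have := congrArg Real.sqrt h
  simpa [Real.sqrt_sq, norm_nonneg] using this
lemma inner_clm'_orthog {m n k : Type*} [Fintype m] [Fintype n] [Fintype k]
    [DecidableEq n] [DecidableEq m] [DecidableEq k]
    (V : Matrix m n ℝ) (W : Matrix m k ℝ) (hVW : Vᵀ * W = 0)
    (u : EuclideanSpace ℝ k) (v : EuclideanSpace ℝ n) :
    (inner ℝ (clm' W u) (clm' V v) : ℝ) = 0 := by
  rw [inner_clm'_left]
  have h1 : clm' Wᵀ (clm' V v) = clm' (Wᵀ * V) v := by rw [clm'_mul]; rfl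
  have h0 : Wᵀ * V = 0 := by
    have := congrArg Matrix.transpose hVW
    simpa [Matrix.transpose_mul] using this
  rw [h1, h0, clm'_zero]
  simp
lemma spectralNorm'_transpose {m n : Type*} [Fintype m] [Fintype n] [DecidableEq n] [DecidableEq m]
    (M : Matrix m n ℝ) : spectralNorm' Mᵀ = spectralNorm' M := by
  rw [spectralNorm'_eq, spectralNorm'_eq]
  unfold clm'
  rw [transpose_eq_conjTranspose', Matrix.toEuclideanLin_conjTranspose_eq_adjoint,
    LinearMap.adjoint_toContinuousLinearMap]
  exact LinearIsometryEquiv.norm_map ContinuousLinearMap.adjoint _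
lemma opNorm_eq_of_norm_eq {E F G : Type*} [NormedAddCommGroup E] [NormedAddCommGroup F]
    [NormedAddCommGroup G] [NormedSpace ℝ E] [NormedSpace ℝ F] [NormedSpace ℝ G]
    (f : E →L[ℝ] F) (g : E →L[ℝ] G) (h : ∀ x, ‖f x‖ = ‖g x‖) : ‖f‖ = ‖g‖ :=
  le_antisymm
    (f.opNorm_le_bound (norm_nonneg g) fun x => (h x).le.trans (g.le_opNorm x))
    (g.opNorm_le_bound (norm_nonneg f) fun x => ((h x).symm).le.trans (f.le_opNorm x))

lemma proj_sq_le {N Q P : Type*} [Fintype N] [Fintype Q] [Fintype P]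
    [DecidableEq N] [DecidableEq Q] [DecidableEq P]
    (V : Matrix N Q ℝ) (W : Matrix N P ℝ)
    (hV : Vᵀ * V = 1) (hW : Wᵀ * W = 1) (hVW : Vᵀ * W = 0)
    (x : EuclideanSpace ℝ N) :
    ‖clm' Vᵀ x‖ ^ 2 + ‖clm' Wᵀ x‖ ^ 2 ≤ ‖x‖ ^ 2 := by
  have h0 : Wᵀ * V = 0 := by
    have := congrArg Matrix.transpose hVW
    simpa [Matrix.transpose_mul] using this
  set a := clm' Vᵀ x with ha
  set b := clm' Wᵀ x with hb
  set u := clm' V a + clm' W b with hu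
  have hinner : (inner ℝ x u : ℝ) = ‖a‖ ^ 2 + ‖b‖ ^ 2 := by
    rw [hu, inner_add_right]
    have h1 : (inner ℝ x (clm' V a) : ℝ) = ‖a‖ ^ 2 := by
      rw [real_inner_comm, inner_clm'_left, ← ha, real_inner_self_eq_norm_sq]
    have h2 : (inner ℝ x (clm' W b) : ℝ) = ‖b‖ ^ 2 := by
      rw [real_inner_comm, inner_clm'_left, ← hb, real_inner_self_eq_norm_sq]
    rw [h1, h2]
  have hun : ‖u‖ ^ 2 = ‖a‖ ^ 2 + ‖b‖ ^ 2 := by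
    rw [hu, norm_add_sq_real, norm_clm'_isometry V hV, norm_clm'_isometry W hW,
      inner_clm'_orthog W V h0]
    ring
  have hcs : (inner ℝ x u : ℝ) ≤ ‖x‖ * ‖u‖ := real_inner_le_norm x u
  nlinarith [norm_nonneg u, norm_nonneg x, sq_nonneg (‖u‖ - ‖x‖)]

lemma spectral_key {N Q P : Type*} [Fintype N] [Fintype Q] [Fintype P]
    [DecidableEq N] [DecidableEq Q] [DecidableEq P]
    (V : Matrix N Q ℝ) (W : Matrix N P ℝ)
    (hV : Vᵀ * V = 1) (hW : Wᵀ * W = 1) (hVW : Vᵀ * W = 0)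
    (K : Matrix P Q ℝ) :
    spectralNorm' (W * K * Vᵀ + V * Kᵀ * Wᵀ) = spectralNorm' K := by
  have h0 : Wᵀ * V = 0 := by
    have := congrArg Matrix.transpose hVW
    simpa [Matrix.transpose_mul] using this
  have hKt : ‖clm' Kᵀ‖ = ‖clm' K‖ := by
    rw [← spectralNorm'_eq, ← spectralNorm'_eq]; exact spectralNorm'_transpose K
  rw [spectralNorm'_eq, spectralNorm'_eq]
  apply le_antisymm
  · apply ContinuousLinearMap.opNorm_le_bound _ (norm_nonneg _)
    intro x
    have hx : clm' (W * K * Vᵀ + V * Kᵀ * Wᵀ) x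
        = clm' W (clm' K (clm' Vᵀ x)) + clm' V (clm' Kᵀ (clm' Wᵀ x)) := by
      simp only [clm'_add, clm'_mul, ContinuousLinearMap.add_apply,
        ContinuousLinearMap.comp_apply]
    set a := clm' Vᵀ x with ha
    set b := clm' Wᵀ x with hb
    have h1 : ‖clm' (W * K * Vᵀ + V * Kᵀ * Wᵀ) x‖ ^ 2 = ‖clm' K a‖ ^ 2 + ‖clm' Kᵀ b‖ ^ 2 := by
      rw [hx, norm_add_sq_real, inner_clm'_orthog V W hVW,
        norm_clm'_isometry W hW, norm_clm'_isometry V hV]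
      ring
    have h2 : ‖a‖ ^ 2 + ‖b‖ ^ 2 ≤ ‖x‖ ^ 2 := proj_sq_le V W hV hW hVW x
    have h3 : ‖clm' K a‖ ≤ ‖clm' K‖ * ‖a‖ := (clm' K).le_opNorm a
    have h4 : ‖clm' Kᵀ b‖ ≤ ‖clm' K‖ * ‖b‖ := by
      have := (clm' Kᵀ).le_opNorm b; rwa [hKt] at this
    have h3' : ‖clm' K a‖ ^ 2 ≤ (‖clm' K‖ * ‖a‖) ^ 2 := pow_le_pow_left₀ (norm_nonneg _) h3 2
    have h4' : ‖clm' Kᵀ b‖ ^ 2 ≤ (‖clm' K‖ * ‖b‖) ^ 2 := pow_le_pow_left₀ (norm_nonneg _) h4 2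
    have hsq : ‖clm' (W * K * Vᵀ + V * Kᵀ * Wᵀ) x‖ ^ 2 ≤ (‖clm' K‖ * ‖x‖) ^ 2 := by
      nlinarith [sq_nonneg ‖clm' K‖, norm_nonneg (clm' K), norm_nonneg x]
    have := Real.sqrt_le_sqrt hsq
    rwa [Real.sqrt_sq (norm_nonneg _), Real.sqrt_sq (by positivity)] at this
  · have hMV : (W * K * Vᵀ + V * Kᵀ * Wᵀ) * V = W * K := by
      rw [Matrix.add_mul, Matrix.mul_assoc (W * K), Matrix.mul_assoc (V * Kᵀ), hV, h0,
        Matrix.mul_one, Matrix.mul_zero, add_zero]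
    have hWK : ‖clm' K‖ = ‖clm' (W * K)‖ := by
      apply opNorm_eq_of_norm_eq
      intro x
      rw [clm'_mul, ContinuousLinearMap.comp_apply, norm_clm'_isometry W hW]
    have hVnorm : ‖clm' V‖ ≤ 1 := by
      apply ContinuousLinearMap.opNorm_le_bound _ zero_le_one
      intro x; rw [norm_clm'_isometry V hV, one_mul]
    calc ‖clm' K‖ = ‖clm' ((W * K * Vᵀ + V * Kᵀ * Wᵀ) * V)‖ := by rw [hMV, ← hWK]
      _ ≤ ‖clm' (W * K * Vᵀ + V * Kᵀ * Wᵀ)‖ * ‖clm' V‖ := by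
          rw [clm'_mul]; exact ContinuousLinearMap.opNorm_comp_le _ _
      _ ≤ ‖clm' (W * K * Vᵀ + V * Kᵀ * Wᵀ)‖ := by
          exact mul_le_of_le_one_right (norm_nonneg _) hVnorm

/-- In the extended block Arnoldi setting, if `Y` solves the
projected differential Riccati equation and `Y(t)` is symmetric, then the
spectral norm of the residual of `Xₘ(t) = V Y(t) Vᵀ` equals the spectral norm
of `H Eᵀ Y(t)` (that is, `H` times the last `p` rows of `Y(t)`). -/
theorem residual_norm_extended_block_arnoldi
    {n l s q p : ℕ} (hpq : p ≤ q)
    (A : Matrix (Fin n) (Fin n) ℝ) (B : Matrix (Fin n) (Fin l) ℝ)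
    (C : Matrix (Fin s) (Fin n) ℝ)
    (V : Matrix (Fin n) (Fin q) ℝ) (W : Matrix (Fin n) (Fin p) ℝ)
    (hV : Vᵀ * V = 1) (hW : Wᵀ * W = 1) (hVW : Vᵀ * W = 0)
    (T : Matrix (Fin q) (Fin q) ℝ) (hT : T = Vᵀ * Aᵀ * V)
    (E : Matrix (Fin q) (Fin p) ℝ)
    (hE : ∀ i j, E i j = if (i : ℕ) = q - p + (j : ℕ) then 1 else 0)
    (H : Matrix (Fin p) (Fin p) ℝ)
    (hArnoldi : Aᵀ * V = V * T + W * H * Eᵀ)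
    (G : Matrix (Fin q) (Fin s) ℝ) (hC : Cᵀ = V * G)
    (Bq : Matrix (Fin q) (Fin l) ℝ) (hBq : Bq = Vᵀ * B)
    (Y Y' : ℝ → Matrix (Fin q) (Fin q) ℝ)
    (hY : ∀ t, HasDerivAt Y (Y' t) t)
    (hYsymm : ∀ t, (Y t)ᵀ = Y t)
    (hode : ∀ t, Y' t = T * Y t + Y t * Tᵀ - Y t * Bq * Bqᵀ * Y t + G * Gᵀ)
    (Xm : ℝ → Matrix (Fin n) (Fin n) ℝ) (hXm : ∀ t, Xm t = V * Y t * Vᵀ)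
    (Rm : ℝ → Matrix (Fin n) (Fin n) ℝ)
    (hRm : ∀ t, Rm t =
      deriv Xm t - Aᵀ * Xm t - Xm t * A + Xm t * B * Bᵀ * Xm t - Cᵀ * C) :
    ∀ t, spectralNorm' (Rm t) = spectralNorm' (H * Eᵀ * Y t) := by
  intro t
  -- derivative of Xm
  have hL : HasDerivAt Xm (V * Y' t * Vᵀ) t := by
    have hfun : Xm = fun τ => V * Y τ * Vᵀ := funext hXm
    rw [hfun]
    let L : Matrix (Fin q) (Fin q) ℝ →ₗ[ℝ] Matrix (Fin n) (Fin n) ℝ :=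
      { toFun := fun M => V * M * Vᵀ
        map_add' := by intros; simp [Matrix.mul_add, Matrix.add_mul]
        map_smul' := by intros; simp [Matrix.mul_smul, Matrix.smul_mul] }
    have := (L.toContinuousLinearMap.hasFDerivAt (x := Y t)).comp_hasDerivAt t (hY t)
    exact this
  have hderiv : deriv Xm t = V * Y' t * Vᵀ := hL.deriv
  -- transposed Arnoldi relation
  have hVA : Vᵀ * A = Tᵀ * Vᵀ + E * (Hᵀ * Wᵀ) := by
    have := congrArg Matrix.transpose hArnoldi
    simpa [Matrix.transpose_mul, Matrix.transpose_add, Matrix.mul_assoc] using this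
  have hCC : C = Gᵀ * Vᵀ := by
    have := congrArg Matrix.transpose hC
    simpa [Matrix.transpose_mul] using this
  -- residual formula
  have hRmEq : Rm t = -(W * (H * Eᵀ * Y t) * Vᵀ + V * (H * Eᵀ * Y t)ᵀ * Wᵀ) := by
    have e1 : Aᵀ * (V * Y t * Vᵀ) = V * T * Y t * Vᵀ + W * H * Eᵀ * Y t * Vᵀ := by
      calc Aᵀ * (V * Y t * Vᵀ) = Aᵀ * V * Y t * Vᵀ := by
            rw [← Matrix.mul_assoc, ← Matrix.mul_assoc]
        _ = _ := by rw [hArnoldi, Matrix.add_mul, Matrix.add_mul]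
    have e2 : V * Y t * Vᵀ * A = V * Y t * (Tᵀ * Vᵀ) + V * Y t * (E * (Hᵀ * Wᵀ)) := by
      calc V * Y t * Vᵀ * A = V * Y t * (Vᵀ * A) := by rw [Matrix.mul_assoc]
        _ = _ := by rw [hVA, Matrix.mul_add]
    rw [hRm, hderiv, hXm, hode, hBq, hCC, e1, e2]
    simp only [Matrix.transpose_mul, Matrix.transpose_transpose, hYsymm t,
      Matrix.mul_add, Matrix.add_mul, Matrix.mul_sub, Matrix.sub_mul, Matrix.mul_assoc,
      neg_add]
    abel
  rw [hRmEq, spectralNorm'_eq, clm'_neg, norm_neg, ← spectralNorm'_eq]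
  exact spectral_key V W hV hW hVW (H * Eᵀ * Y t)
end

section
/- Let $A$ be a real $n \times n$ matrix, $B$ a real $n \times \ell$ matrix, $C$ a real $s \times n$ matrix. Let $V$ be a real $n \times q$ matrix with $V^T V = I_q$, $W$ a real $n \times p$ matrix with $W^T W = I_p$ and $V^T W = 0$. Let $\mathcal{T} = V^T A^T V$, let $E$ be the $q \times p$ matrix of the last $p$ columns of $I_q$, and let $H$ be a $p \times p$ matrix with $A^T V = V \mathcal{T} + W H E^T$. Assume $C^T = V G$ for some $q \times s$ matrix $G$, set $B_q = V^T B$, and let $Y : \mathbb{R} \to \mathbb{R}^{q \times q}$ be differentiable satisfying $\dot{Y}(t) = \mathcal{T} Y(t) + Y(t) \mathcal{T}^T - Y(t) B_q B_q^T Y(t) + G G^T$. Define $X_m(t) = V Y(t) V^T$ and $F = V E H^T W^T$. Then $X_m$ is an exact solution of the perturbed differential Riccati equation: for every $t$, $\dot{X}_m(t) = (A - F)^T X_m(t) + X_m(t) (A - F) - X_m(t) B B^T X_m(t) + C^T C$. -/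
open scoped Matrix

attribute [local instance] Matrix.normedAddCommGroup Matrix.normedSpace

/-- In the extended block Arnoldi setting, if `Y` solves the
projected differential Riccati equation, then `Xₘ(t) = V Y(t) Vᵀ` is an exact
solution of the differential Riccati equation perturbed by `F = V E Hᵀ Wᵀ`:
`Ẋₘ(t) = (A - F)ᵀ Xₘ(t) + Xₘ(t) (A - F) - Xₘ(t) B Bᵀ Xₘ(t) + Cᵀ C`. -/
theorem approximate_solution_solves_perturbed_riccati
    {n l s q p : ℕ} (hpq : p ≤ q)
    (A : Matrix (Fin n) (Fin n) ℝ) (B : Matrix (Fin n) (Fin l) ℝ)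
    (C : Matrix (Fin s) (Fin n) ℝ)
    (V : Matrix (Fin n) (Fin q) ℝ) (W : Matrix (Fin n) (Fin p) ℝ)
    (hV : Vᵀ * V = 1) (hW : Wᵀ * W = 1) (hVW : Vᵀ * W = 0)
    (T : Matrix (Fin q) (Fin q) ℝ) (hT : T = Vᵀ * Aᵀ * V)
    (E : Matrix (Fin q) (Fin p) ℝ)
    (hE : ∀ i j, E i j = if (i : ℕ) = q - p + (j : ℕ) then 1 else 0)
    (H : Matrix (Fin p) (Fin p) ℝ)
    (hArnoldi : Aᵀ * V = V * T + W * H * Eᵀ)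
    (G : Matrix (Fin q) (Fin s) ℝ) (hC : Cᵀ = V * G)
    (Bq : Matrix (Fin q) (Fin l) ℝ) (hBq : Bq = Vᵀ * B)
    (Y Y' : ℝ → Matrix (Fin q) (Fin q) ℝ)
    (hY : ∀ t, HasDerivAt Y (Y' t) t)
    (hode : ∀ t, Y' t = T * Y t + Y t * Tᵀ - Y t * Bq * Bqᵀ * Y t + G * Gᵀ)
    (Xm : ℝ → Matrix (Fin n) (Fin n) ℝ) (hXm : ∀ t, Xm t = V * Y t * Vᵀ)
    (F : Matrix (Fin n) (Fin n) ℝ) (hF : F = V * E * Hᵀ * Wᵀ) :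
    ∀ t, HasDerivAt Xm
      ((A - F)ᵀ * Xm t + Xm t * (A - F) - Xm t * B * Bᵀ * Xm t + Cᵀ * C) t := by
  intro t
  -- the map M ↦ V * M * Vᵀ as a continuous linear map
  let L : Matrix (Fin q) (Fin q) ℝ →ₗ[ℝ] Matrix (Fin n) (Fin n) ℝ :=
    { toFun := fun M => V * M * Vᵀ
      map_add' := fun M N => by simp [Matrix.mul_add, Matrix.add_mul]
      map_smul' := fun c M => by
        simp [Matrix.mul_smul, Matrix.smul_mul] }
  have hd : HasDerivAt (fun x => V * Y x * Vᵀ) (V * Y' t * Vᵀ) t := by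
    have := (L.toContinuousLinearMap.hasFDerivAt (x := Y t)).comp_hasDerivAt t (hY t)
    exact this
  have hXm' : Xm = fun x => V * Y x * Vᵀ := funext hXm
  rw [hXm']
  have key1 : (A - F)ᵀ * V = V * T := by
    rw [Matrix.transpose_sub, Matrix.sub_mul, hArnoldi, hF]
    simp [Matrix.transpose_mul, Matrix.mul_assoc, hV]
  have key2 : Vᵀ * (A - F) = Tᵀ * Vᵀ := by
    have h := congrArg Matrix.transpose key1
    simpa [Matrix.transpose_mul] using h
  have hCC : Cᵀ * C = V * (G * Gᵀ) * Vᵀ := by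
    have hC' : C = Gᵀ * Vᵀ := by
      have := congrArg Matrix.transpose hC
      simpa [Matrix.transpose_mul] using this
    rw [hC, hC']; simp only [Matrix.mul_assoc]
  have hBq' : Bᵀ * V = Bqᵀ := by
    rw [hBq, Matrix.transpose_mul, Matrix.transpose_transpose]
  convert hd using 1
  rw [hode]
  calc (A - F)ᵀ * (V * Y t * Vᵀ) + V * Y t * Vᵀ * (A - F)
        - V * Y t * Vᵀ * B * Bᵀ * (V * Y t * Vᵀ) + Cᵀ * C
      = ((A - F)ᵀ * V) * Y t * Vᵀ + V * Y t * (Vᵀ * (A - F))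
        - V * (Y t * (Vᵀ * B) * (Bᵀ * V) * Y t) * Vᵀ + V * (G * Gᵀ) * Vᵀ := by
        rw [hCC]; simp only [Matrix.mul_assoc]
    _ = V * (T * Y t) * Vᵀ + V * (Y t * Tᵀ) * Vᵀ
        - V * (Y t * Bq * Bqᵀ * Y t) * Vᵀ + V * (G * Gᵀ) * Vᵀ := by
        rw [key1, key2, ← hBq, hBq']; simp only [Matrix.mul_assoc]
    _ = V * (T * Y t + Y t * Tᵀ - Y t * Bq * Bqᵀ * Y t + G * Gᵀ) * Vᵀ := by
        simp only [Matrix.mul_add, Matrix.add_mul, Matrix.mul_sub, Matrix.sub_mul]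
end

section
/- Let $A$ be a real $n \times n$ matrix, $B$ a real $n \times \ell$ matrix, $C$ a real $s \times n$ matrix. Let $X : \mathbb{R} \to \mathbb{R}^{n \times n}$ be a differentiable solution of the differential Riccati equation $\dot{X}(t) = A^T X(t) + X(t) A - X(t) B B^T X(t) + C^T C$, and let $X_m : \mathbb{R} \to \mathbb{R}^{n \times n}$ be any differentiable matrix function with residual $R_m(t) = \dot{X}_m(t) - A^T X_m(t) - X_m(t) A + X_m(t) B B^T X_m(t) - C^T C$. Then the error $E_m(t) = X(t) - X_m(t)$ satisfies, for every $t$, the differential equation $\dot{E}_m(t) = (A^T - X(t) B B^T) E_m(t) + E_m(t) (A - B B^T X(t)) + E_m(t) B B^T E_m(t) - R_m(t)$. -/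
open scoped Matrix

attribute [local instance] Matrix.normedAddCommGroup Matrix.normedSpace

/-- If `X` solves the differential Riccati equation
`Ẋ = Aᵀ X + X A - X B Bᵀ X + Cᵀ C` and `Xₘ` is any differentiable matrix
function with residual `Rₘ(t) = Ẋₘ(t) - Aᵀ Xₘ(t) - Xₘ(t) A + Xₘ(t) B Bᵀ Xₘ(t) - Cᵀ C`,
then the error `Eₘ = X - Xₘ` satisfies
`Ėₘ = (Aᵀ - X B Bᵀ) Eₘ + Eₘ (A - B Bᵀ X) + Eₘ B Bᵀ Eₘ - Rₘ`. -/
theorem error_equation_riccati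
    {n l s : ℕ}
    (A : Matrix (Fin n) (Fin n) ℝ) (B : Matrix (Fin n) (Fin l) ℝ)
    (C : Matrix (Fin s) (Fin n) ℝ)
    (X X' : ℝ → Matrix (Fin n) (Fin n) ℝ)
    (hX : ∀ t, HasDerivAt X (X' t) t)
    (hXode : ∀ t, X' t = Aᵀ * X t + X t * A - X t * B * Bᵀ * X t + Cᵀ * C)
    (Xm Xm' : ℝ → Matrix (Fin n) (Fin n) ℝ)
    (hXm : ∀ t, HasDerivAt Xm (Xm' t) t)
    (Rm : ℝ → Matrix (Fin n) (Fin n) ℝ)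
    (hRm : ∀ t, Rm t =
      Xm' t - Aᵀ * Xm t - Xm t * A + Xm t * B * Bᵀ * Xm t - Cᵀ * C)
    (Em : ℝ → Matrix (Fin n) (Fin n) ℝ)
    (hEm : ∀ t, Em t = X t - Xm t) :
    ∀ t, HasDerivAt Em
      ((Aᵀ - X t * B * Bᵀ) * Em t + Em t * (A - B * Bᵀ * X t)
        + Em t * B * Bᵀ * Em t - Rm t) t := by
  intro t
  have h : HasDerivAt (fun t => X t - Xm t) (X' t - Xm' t) t := (hX t).sub (hXm t)
  have hfun : Em = fun t => X t - Xm t := funext hEm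
  rw [hfun]
  convert h using 1
  rw [hXode, hRm]
  simp only [Matrix.mul_sub, Matrix.sub_mul, Matrix.mul_add, Matrix.add_mul,
    Matrix.mul_assoc]
  abel
end

section
/- Let $A$ be a real $n \times n$ matrix, $B$ a real $n \times \ell$ matrix, $C$ a real $s \times n$ matrix, and let $X_0$ be a real symmetric $n \times n$ matrix. Suppose $\widetilde{X}$ is a real symmetric $n \times n$ matrix solving the algebraic Riccati equation $A^T \widetilde{X} + \widetilde{X} A - \widetilde{X} B B^T \widetilde{X} + C^T C = 0$, set $\widetilde{A} = A - B B^T \widetilde{X}$, and suppose $\widetilde{Z}$ is a real symmetric $n \times n$ matrix solving the Lyapunov equation $\widetilde{A} \widetilde{Z} + \widetilde{Z} \widetilde{A}^T - B B^T = 0$. Assume $X_0 - \widetilde{X}$ is invertible, and for $t \in \mathbb{R}$ define $M(t) = e^{t \widetilde{A}}\, \widetilde{Z}\, e^{t \widetilde{A}^T} + (X_0 - \widetilde{X})^{-1} - \widetilde{Z}$; assume $M(t)$ is invertible for all $t$ in an interval $[0, T_f]$. Then the matrix function $X(t) = \widetilde{X} + e^{t \widetilde{A}^T}\, M(t)^{-1}\,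 e^{t \widetilde{A}}$ satisfies $X(0) = X_0$ and is a solution of the differential Riccati equation: for every $t \in [0, T_f]$, $\dot{X}(t) = A^T X(t) + X(t) A - X(t) B B^T X(t) + C^T C$. -/
open scoped Matrix
open NormedSpace

section RiccatiAux

attribute [local instance] Matrix.linftyOpNormedRing Matrix.linftyOpNormedAlgebra

theorem riccati_aux_entry {n l : ℕ}
    (A : Matrix (Fin n) (Fin n) ℝ) (B : Matrix (Fin n) (Fin l) ℝ)
    (Q : Matrix (Fin n) (Fin n) ℝ)
    (X0 : Matrix (Fin n) (Fin n) ℝ)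
    (Xt : Matrix (Fin n) (Fin n) ℝ) (hXt : Xtᵀ = Xt)
    (hare : Aᵀ * Xt + Xt * A - Xt * B * Bᵀ * Xt + Q = 0)
    (At : Matrix (Fin n) (Fin n) ℝ) (hAt : At = A - B * Bᵀ * Xt)
    (Zt : Matrix (Fin n) (Fin n) ℝ)
    (hlyap : At * Zt + Zt * Atᵀ - B * Bᵀ = 0)
    (M : ℝ → Matrix (Fin n) (Fin n) ℝ)
    (hM : ∀ t, M t = exp (t • At) * Zt * exp (t • Atᵀ) + (X0 - Xt)⁻¹ - Zt)
    (X : ℝ → Matrix (Fin n) (Fin n) ℝ)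
    (hX : ∀ t, X t = Xt + exp (t • Atᵀ) * (M t)⁻¹ * exp (t • At))
    (t : ℝ) (hMt : IsUnit (M t)) (i j : Fin n) :
    HasDerivAt (fun u => X u i j)
      ((Aᵀ * X t + X t * A - X t * B * Bᵀ * X t + Q) i j) t := by
  have hE : HasDerivAt (fun u : ℝ => exp (u • At)) (exp (t • At) * At) t :=
    hasDerivAt_exp_smul_const At t
  have hE' : HasDerivAt (fun u : ℝ => exp (u • At)) (At * exp (t • At)) t :=
    hasDerivAt_exp_smul_const' At t
  have hF : HasDerivAt (fun u : ℝ => exp (u • Atᵀ)) (Atᵀ * exp (t • Atᵀ)) t :=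
    hasDerivAt_exp_smul_const' Atᵀ t
  set e := exp (t • At) with he
  set f := exp (t • Atᵀ) with hf
  have hc : At * e = e * At := (hasDerivAt_exp_smul_const' At t).unique
    (hasDerivAt_exp_smul_const At t)
  have hlyap' : At * Zt + Zt * Atᵀ = B * Bᵀ := sub_eq_zero.mp hlyap
  have hMfun : M = fun u => exp (u • At) * Zt * exp (u • Atᵀ) + ((X0 - Xt)⁻¹ - Zt) :=
    funext fun u => by rw [hM u, add_sub_assoc]
  have hdeq : At * e * Zt * f + e * Zt * (Atᵀ * f) = e * (B * Bᵀ) * f := by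
    rw [hc, ← hlyap']; noncomm_ring
  have hMd : HasDerivAt M (e * (B * Bᵀ) * f) t := by
    rw [hMfun, ← hdeq]
    exact ((hE'.mul_const Zt).mul hF).add_const _
  obtain ⟨u, hu⟩ := hMt
  set w := (M t)⁻¹ with hw
  have hui : (↑u⁻¹ : Matrix (Fin n) (Fin n) ℝ) = w := by
    rw [hw, ← hu, Matrix.coe_units_inv]
  have hWd : HasDerivAt (fun s => Ring.inverse (M s)) (-(w * (e * (B * Bᵀ) * f) * w)) t := by
    have h1 : HasFDerivAt Ring.inverse
        (-(ContinuousLinearMap.mulLeftRight ℝ (Matrix (Fin n) (Fin n) ℝ) ↑u⁻¹ ↑u⁻¹)) (M t) := by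
      rw [← hu]; exact hasFDerivAt_ringInverse u
    have h2 := h1.comp_hasDerivAt t hMd
    simp only [hui] at h2
    exact h2
  have hXfun : X = fun s => Xt + exp (s • Atᵀ) * Ring.inverse (M s) * exp (s • At) :=
    funext fun s => by rw [hX s, Matrix.nonsing_inv_eq_ringInverse]
  have hrw : Ring.inverse (M t) = w := (Matrix.nonsing_inv_eq_ringInverse _).symm
  have hXd0 : HasDerivAt X
      ((Atᵀ * f * w + f * (-(w * (e * (B * Bᵀ) * f) * w))) * e + f * w * (e * At)) t := by
    rw [hXfun]
    have := ((hF.mul hWd).mul hE).const_add Xt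
    simp only [Pi.mul_apply] at this
    rw [hrw] at this
    exact this
  have hXteq : X t = Xt + f * w * e := by rw [hX t]
  have hAtT : Atᵀ = Aᵀ - Xt * (B * Bᵀ) := by
    rw [hAt, Matrix.transpose_sub, Matrix.transpose_mul, Matrix.transpose_mul,
      Matrix.transpose_transpose, hXt]
  have hQ : Q = -(Aᵀ * Xt + Xt * A - Xt * B * Bᵀ * Xt) := (add_eq_zero_iff_neg_eq.mp hare).symm
  have hkey : (Atᵀ * f * w + f * (-(w * (e * (B * Bᵀ) * f) * w))) * e + f * w * (e * At)
      = Aᵀ * X t + X t * A - X t * B * Bᵀ * X t + Q := by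
    rw [hXteq, hQ, hAtT, hAt]
    simp only [Matrix.sub_mul, Matrix.mul_sub, Matrix.add_mul, Matrix.mul_add, Matrix.mul_assoc,
      Matrix.neg_mul, Matrix.mul_neg, neg_neg, neg_add, sub_eq_add_neg]
    abel
  rw [hkey] at hXd0
  -- extract the (i, j) entry
  have hb : ∀ (Y : Matrix (Fin n) (Fin n) ℝ), ‖Y i j‖ ≤ 1 * ‖Y‖ := by
    intro Y
    rw [one_mul, ← coe_nnnorm, ← coe_nnnorm, NNReal.coe_le_coe, Matrix.linfty_opNNNorm_def]
    exact le_trans (Finset.single_le_sum (f := fun j' => ‖Y i j'‖₊)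
      (fun _ _ => zero_le) (Finset.mem_univ j))
      (Finset.le_sup (f := fun i' => ∑ j' : Fin n, ‖Y i' j'‖₊) (Finset.mem_univ i))
  let L : Matrix (Fin n) (Fin n) ℝ →ₗ[ℝ] ℝ :=
    { toFun := fun Y => Y i j, map_add' := fun _ _ => rfl, map_smul' := fun _ _ => rfl }
  let Lc : Matrix (Fin n) (Fin n) ℝ →L[ℝ] ℝ := L.mkContinuous 1 hb
  exact Lc.hasFDerivAt.comp_hasDerivAt t hXd0

end RiccatiAux


open scoped Matrix

attribute [local instance] Matrix.normedAddCommGroup Matrix.normedSpace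

/-- Closed-form solution of the differential Riccati
equation: if `X̃` solves the algebraic Riccati equation, `Ã = A - B Bᵀ X̃`,
`Z̃` solves the Lyapunov equation `Ã Z̃ + Z̃ Ãᵀ - B Bᵀ = 0`, `X₀ - X̃` is
invertible, and `M(t) = e^{tÃ} Z̃ e^{tÃᵀ} + (X₀ - X̃)⁻¹ - Z̃` is invertible on
`[0, T_f]`, then `X(t) = X̃ + e^{tÃᵀ} M(t)⁻¹ e^{tÃ}` satisfies `X(0) = X₀` and
solves the differential Riccati equation on `[0, T_f]`. -/
theorem riccati_closed_form_solution
    {n l s : ℕ}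
    (A : Matrix (Fin n) (Fin n) ℝ) (B : Matrix (Fin n) (Fin l) ℝ)
    (C : Matrix (Fin s) (Fin n) ℝ)
    (X0 : Matrix (Fin n) (Fin n) ℝ) (hX0 : X0ᵀ = X0)
    (Xt : Matrix (Fin n) (Fin n) ℝ) (hXt : Xtᵀ = Xt)
    (hare : Aᵀ * Xt + Xt * A - Xt * B * Bᵀ * Xt + Cᵀ * C = 0)
    (At : Matrix (Fin n) (Fin n) ℝ) (hAt : At = A - B * Bᵀ * Xt)
    (Zt : Matrix (Fin n) (Fin n) ℝ) (hZt : Ztᵀ = Zt)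
    (hlyap : At * Zt + Zt * Atᵀ - B * Bᵀ = 0)
    (hinv : IsUnit (X0 - Xt))
    (Tf : ℝ) (hTf : 0 < Tf)
    (M : ℝ → Matrix (Fin n) (Fin n) ℝ)
    (hM : ∀ t, M t = NormedSpace.exp (t • At) * Zt * NormedSpace.exp (t • Atᵀ)
        + (X0 - Xt)⁻¹ - Zt)
    (hMinv : ∀ t ∈ Set.Icc (0 : ℝ) Tf, IsUnit (M t))
    (X : ℝ → Matrix (Fin n) (Fin n) ℝ)
    (hX : ∀ t, X t = Xt + NormedSpace.exp (t • Atᵀ) * (M t)⁻¹ * NormedSpace.exp (t • At)) :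
    X 0 = X0 ∧
      ∀ t ∈ Set.Icc (0 : ℝ) Tf,
        HasDerivAt X (Aᵀ * X t + X t * A - X t * B * Bᵀ * X t + Cᵀ * C) t := by
  constructor
  · rw [hX 0]
    have h0 : M 0 = (X0 - Xt)⁻¹ := by
      rw [hM 0]
      simp only [zero_smul, NormedSpace.exp_zero, Matrix.one_mul, Matrix.mul_one]
      exact add_sub_cancel_left Zt _
    rw [h0, Matrix.nonsing_inv_nonsing_inv _ ((Matrix.isUnit_iff_isUnit_det _).mp hinv)]
    simp only [zero_smul, NormedSpace.exp_zero, Matrix.one_mul, Matrix.mul_one]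
    exact add_sub_cancel Xt X0
  · intro t ht
    have h := fun i j => riccati_aux_entry A B (Cᵀ * C) X0 Xt hXt hare At hAt Zt hlyap
      M hM X hX t (hMinv t ht) i j
    exact hasDerivAt_pi.mpr fun i => hasDerivAt_pi.mpr fun j => h i j
end
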